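/- Let Σ be a d×d symmetric real matrix and s ≥ 1 an integer. If |vᵀΣv| ≤ δ for every v ∈ ℝ^d with ‖v‖₀ ≤ 2s and ‖v‖₂ = 1, then for every v ∈ ℝ^d, |vᵀΣv| ≤ 27δ(‖v‖₂² + ‖v‖₁²/s). -/

import Mathlib

open Finset Matrix

namespace LW
set_option maxHeartbeats 800000
variable {d : ℕ}

noncomputable def B (Sig : Matrix (Fin d) (Fin d) ℝ) (u w : Fin d → ℝ) : ℝ :=
  dotProduct u (Sig.mulVec w)

noncomputable def supp (w : Fin d → ℝ) : Finset (Fin d) := Finset.univ.filter (fun i => w i ≠ 0)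

noncomputable def n1 (w : Fin d → ℝ) : ℝ := ∑ i, |w i|
noncomputable def n2 (w : Fin d → ℝ) : ℝ := ∑ i, (w i) ^ 2

lemma n1_nonneg (w : Fin d → ℝ) : 0 ≤ n1 w := Finset.sum_nonneg fun i _ => abs_nonneg _
lemma n2_nonneg (w : Fin d → ℝ) : 0 ≤ n2 w := Finset.sum_nonneg fun i _ => sq_nonneg _

lemma n2_eq_sum_supp (w : Fin d → ℝ) : n2 w = ∑ i ∈ supp w, (w i) ^ 2 := by
  rw [n2, supp]
  exact (Finset.sum_filter_of_ne (fun i _ h => by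
    intro h0; exact h (by rw [h0]; ring))).symm

lemma n2_le_card (w : Fin d → ℝ) (M : ℝ) (h : ∀ i, |w i| ≤ M) :
    n2 w ≤ ((supp w).card : ℝ) * M ^ 2 := by
  rw [n2_eq_sum_supp]
  calc ∑ i ∈ supp w, (w i) ^ 2 ≤ ∑ _i ∈ supp w, M ^ 2 := by
        refine Finset.sum_le_sum fun i _ => ?_
        have := pow_le_pow_left₀ (abs_nonneg (w i)) (h i) 2
        simpa [sq_abs] using this
    _ = ((supp w).card : ℝ) * M ^ 2 := by rw [Finset.sum_const, nsmul_eq_mul]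

lemma B_symm (Sig : Matrix (Fin d) (Fin d) ℝ) (hsymm : Sig.IsSymm) (u w : Fin d → ℝ) :
    B Sig u w = B Sig w u := by
  simp only [B, dotProduct, mulVec, Finset.mul_sum]
  rw [Finset.sum_comm]
  refine Finset.sum_congr rfl fun i _ => Finset.sum_congr rfl fun j _ => ?_
  rw [hsymm.apply i j]
  ring



variable {d : ℕ} (Sig : Matrix (Fin d) (Fin d) ℝ)

-- supp lemmas
lemma supp_add_subset (a b : Fin d → ℝ) : supp (a + b) ⊆ supp a ∪ supp b := by
  intro i hi
  simp only [supp, Finset.mem_filter, Finset.mem_union, Finset.mem_univ, true_and, Pi.add_apply] at *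
  by_contra h
  push_neg at h
  exact hi (by rw [h.1, h.2]; ring)

lemma supp_sub_subset (a b : Fin d → ℝ) : supp (a - b) ⊆ supp a ∪ supp b := by
  intro i hi
  simp only [supp, Finset.mem_filter, Finset.mem_union, Finset.mem_univ, true_and, Pi.sub_apply] at *
  by_contra h
  push_neg at h
  exact hi (by rw [h.1, h.2]; ring)

lemma supp_smul (c : ℝ) (hc : c ≠ 0) (u : Fin d → ℝ) : supp (c • u) = supp u := by
  ext i
  simp [supp, hc]

lemma n2_smul (c : ℝ) (u : Fin d → ℝ) : n2 (c • u) = c ^ 2 * n2 u := by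
  simp [n2, Finset.mul_sum, mul_pow]

lemma B_smul_left (c : ℝ) (u w : Fin d → ℝ) : B Sig (c • u) w = c * B Sig u w := by
  simp [B, smul_dotProduct]

lemma B_smul_right (c : ℝ) (u w : Fin d → ℝ) : B Sig u (c • w) = c * B Sig u w := by
  simp [B, mulVec_smul, dotProduct_smul]

lemma B_add_left (u v w : Fin d → ℝ) : B Sig (u + v) w = B Sig u w + B Sig v w := by
  simp [B, add_dotProduct]

lemma polar (hsymm : Sig.IsSymm) (a b : Fin d → ℝ) :
    B Sig (a + b) (a + b) - B Sig (a - b) (a - b) = 4 * B Sig a b := by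
  have h := B_symm Sig hsymm b a
  simp only [B, mulVec_add, mulVec_sub, dotProduct_add, dotProduct_sub, add_dotProduct,
    sub_dotProduct] at *
  linarith

lemma n2_parallelogram (a b : Fin d → ℝ) :
    n2 (a + b) + n2 (a - b) = 2 * n2 a + 2 * n2 b := by
  simp only [n2, Pi.add_apply, Pi.sub_apply, ← Finset.sum_add_distrib, Finset.mul_sum]
  exact Finset.sum_congr rfl fun i _ => by ring

-- scaling of the sparse hypothesis
lemma quad_scale {s : ℕ} {δ : ℝ}
    (hsp : ∀ v : Fin d → ℝ, (supp v).card ≤ 2 * s → n2 v = 1 → |B Sig v v| ≤ δ)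
    {u : Fin d → ℝ} (hu : (supp u).card ≤ 2 * s) : |B Sig u u| ≤ δ * n2 u := by
  by_cases h0 : n2 u = 0
  · have hu0 : u = 0 := by
      funext i
      have : ∀ j ∈ Finset.univ, (u j) ^ 2 = 0 := by
        intro j _
        have := (Finset.sum_eq_zero_iff_of_nonneg (fun j _ => sq_nonneg (u j))).1 h0 j (Finset.mem_univ j)
        exact this
      have := this i (Finset.mem_univ i)
      exact pow_eq_zero_iff (n := 2) (by norm_num) |>.1 this
    simp [hu0, B, n2]
  · have hn2 : 0 < n2 u := lt_of_le_of_ne (n2_nonneg u) (Ne.symm h0)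
    set c := Real.sqrt (n2 u) with hc
    have hcpos : 0 < c := Real.sqrt_pos.2 hn2
    have hc2 : c ^ 2 = n2 u := Real.sq_sqrt hn2.le
    have hsupp : supp (c⁻¹ • u) = supp u := supp_smul _ (inv_ne_zero hcpos.ne') u
    have hn2' : n2 (c⁻¹ • u) = 1 := by
      rw [n2_smul, ← hc2]
      field_simp
    have h := hsp _ (by rw [hsupp]; exact hu) hn2'
    have hBeq : B Sig (c⁻¹ • u) (c⁻¹ • u) = c⁻¹ * (c⁻¹ * B Sig u u) := by
      rw [B_smul_left, B_smul_right]
    rw [hBeq, abs_mul, abs_mul, abs_inv, abs_of_pos hcpos] at h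
    have h2 : |B Sig u u| ≤ δ * c ^ 2 := by
      rw [← mul_le_mul_iff_right₀ (by positivity : (0:ℝ) < c⁻¹ * c⁻¹)]
      calc c⁻¹ * c⁻¹ * |B Sig u u| = c⁻¹ * (c⁻¹ * |B Sig u u|) := by ring
        _ ≤ δ := h
        _ = δ * (c⁻¹ * c) * (c⁻¹ * c) := by rw [inv_mul_cancel₀ hcpos.ne']; ring
        _ = c⁻¹ * c⁻¹ * (δ * c ^ 2) := by ring
    rwa [hc2] at h2

lemma bil_half {s : ℕ} {δ : ℝ} (hsymm : Sig.IsSymm)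
    (hsp : ∀ v : Fin d → ℝ, (supp v).card ≤ 2 * s → n2 v = 1 → |B Sig v v| ≤ δ)
    {a b : Fin d → ℝ} (ha : (supp a).card ≤ s) (hb : (supp b).card ≤ s) :
    |B Sig a b| ≤ δ / 2 * (n2 a + n2 b) := by
  have hca : (supp (a + b)).card ≤ 2 * s := by
    have := Finset.card_le_card (supp_add_subset a b)
    have h2 := Finset.card_union_le (supp a) (supp b)
    omega
  have hcs : (supp (a - b)).card ≤ 2 * s := by
    have := Finset.card_le_card (supp_sub_subset a b)
    have h2 := Finset.card_union_le (supp a) (supp b)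
    omega
  have h1 := quad_scale Sig hsp hca
  have h2 := quad_scale Sig hsp hcs
  have hpol := polar Sig hsymm a b
  have hpar := n2_parallelogram a b
  have : 4 * |B Sig a b| ≤ δ * (2 * n2 a + 2 * n2 b) := by
    calc 4 * |B Sig a b| = |4 * B Sig a b| := by rw [abs_mul]; norm_num
      _ = |B Sig (a + b) (a + b) - B Sig (a - b) (a - b)| := by rw [hpol]
      _ ≤ |B Sig (a + b) (a + b)| + |B Sig (a - b) (a - b)| := abs_sub _ _
      _ ≤ δ * n2 (a + b) + δ * n2 (a - b) := add_le_add h1 h2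
      _ = δ * (2 * n2 a + 2 * n2 b) := by rw [← mul_add, hpar]
  linarith

lemma bil {s : ℕ} {δ : ℝ} (hsymm : Sig.IsSymm)
    (hsp : ∀ v : Fin d → ℝ, (supp v).card ≤ 2 * s → n2 v = 1 → |B Sig v v| ≤ δ)
    {a b : Fin d → ℝ} (ha : (supp a).card ≤ s) (hb : (supp b).card ≤ s) :
    |B Sig a b| ≤ δ * Real.sqrt (n2 a) * Real.sqrt (n2 b) := by
  by_cases h0a : n2 a = 0
  · have ha0 : a = 0 := by
      funext i
      have := (Finset.sum_eq_zero_iff_of_nonneg (fun j _ => sq_nonneg (a j))).1 h0a i (Finset.mem_univ i)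
      exact pow_eq_zero_iff (n := 2) (by norm_num) |>.1 this
    have : n2 (0 : Fin d → ℝ) = 0 := by simp [n2]
    simp [ha0, B, this]
  by_cases h0b : n2 b = 0
  · have hb0 : b = 0 := by
      funext i
      have := (Finset.sum_eq_zero_iff_of_nonneg (fun j _ => sq_nonneg (b j))).1 h0b i (Finset.mem_univ i)
      exact pow_eq_zero_iff (n := 2) (by norm_num) |>.1 this
    have : n2 (0 : Fin d → ℝ) = 0 := by simp [n2]
    simp [hb0, B, this]
  have hna : 0 < n2 a := lt_of_le_of_ne (n2_nonneg a) (Ne.symm h0a)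
  have hnb : 0 < n2 b := lt_of_le_of_ne (n2_nonneg b) (Ne.symm h0b)
  set α := Real.sqrt (n2 a) with hα
  set β := Real.sqrt (n2 b) with hβ
  have hαpos : 0 < α := Real.sqrt_pos.2 hna
  have hβpos : 0 < β := Real.sqrt_pos.2 hnb
  have hα2 : α ^ 2 = n2 a := Real.sq_sqrt hna.le
  have hβ2 : β ^ 2 = n2 b := Real.sq_sqrt hnb.le
  have ha' : (supp (α⁻¹ • a)).card ≤ s := by rw [supp_smul _ (inv_ne_zero hαpos.ne')]; exact ha
  have hb' : (supp (β⁻¹ • b)).card ≤ s := by rw [supp_smul _ (inv_ne_zero hβpos.ne')]; exact hb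
  have h := bil_half Sig hsymm hsp ha' hb'
  rw [n2_smul, n2_smul, ← hα2, ← hβ2] at h
  have e1 : (α⁻¹) ^ 2 * α ^ 2 = 1 := by
    rw [← mul_pow, inv_mul_cancel₀ hαpos.ne']; norm_num
  have e2 : (β⁻¹) ^ 2 * β ^ 2 = 1 := by
    rw [← mul_pow, inv_mul_cancel₀ hβpos.ne']; norm_num
  rw [e1, e2] at h
  have hBeq : B Sig (α⁻¹ • a) (β⁻¹ • b) = α⁻¹ * (β⁻¹ * B Sig a b) := by
    rw [B_smul_left, B_smul_right]
  rw [hBeq, abs_mul, abs_mul, abs_inv, abs_inv, abs_of_pos hαpos, abs_of_pos hβpos] at h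
  have : α⁻¹ * (β⁻¹ * |B Sig a b|) ≤ δ := by linarith
  calc |B Sig a b| = α * β * (α⁻¹ * (β⁻¹ * |B Sig a b|)) := by
        field_simp
    _ ≤ α * β * δ := by
        exact mul_le_mul_of_nonneg_left this (by positivity)
    _ = δ * α * β := by ring



lemma exists_top (w : Fin d → ℝ) {s : ℕ} (hs : 1 ≤ s) (hcard : s ≤ (supp w).card) :
    ∃ A ⊆ supp w, A.card = s ∧
      ∀ i ∈ A, ∀ j ∈ supp w, j ∉ A → |w j| ≤ |w i| := by
  obtain ⟨A₀, hA₀sub, hA₀card⟩ := Finset.exists_subset_card_eq hcard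
  have hP : ((supp w).powersetCard s).Nonempty :=
    ⟨A₀, Finset.mem_powersetCard.2 ⟨hA₀sub, hA₀card⟩⟩
  obtain ⟨A, hAP, hmax⟩ := Finset.exists_max_image ((supp w).powersetCard s)
    (fun A => ∑ i ∈ A, |w i|) hP
  obtain ⟨hAsub, hAcard⟩ := Finset.mem_powersetCard.1 hAP
  refine ⟨A, hAsub, hAcard, ?_⟩
  intro i hi j hj hjA
  by_contra hlt
  push_neg at hlt
  have hjA' : j ∉ A.erase i := fun h => hjA (Finset.mem_of_mem_erase h)
  have hA' : insert j (A.erase i) ∈ (supp w).powersetCard s := by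
    rw [Finset.mem_powersetCard]
    constructor
    · intro x hx
      rcases Finset.mem_insert.1 hx with rfl | hx
      · exact hj
      · exact hAsub (Finset.mem_of_mem_erase hx)
    · rw [Finset.card_insert_of_notMem hjA', Finset.card_erase_of_mem hi, hAcard]
      have : 1 ≤ A.card := Finset.card_pos.2 ⟨i, hi⟩
      omega
  have hle := hmax _ hA'
  rw [Finset.sum_insert hjA'] at hle
  have h2 : ∑ x ∈ A.erase i, |w x| + |w i| = ∑ x ∈ A, |w x| := Finset.sum_erase_add _ _ hi
  linarith

lemma decomp (w : Fin d → ℝ) {s : ℕ} (hs : 1 ≤ s) (hcard : s ≤ (supp w).card) :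
    ∃ w₀ r : Fin d → ℝ,
      w = w₀ + r ∧
      (supp w₀).card ≤ s ∧
      (supp r).card = (supp w).card - s ∧
      n1 w = n1 w₀ + n1 r ∧
      (∀ i, |w₀ i| ≤ |w i|) ∧
      (∀ i, |r i| ≤ n1 w₀ / s) := by
  obtain ⟨A, hAsub, hAcard, hdom⟩ := exists_top w hs hcard
  refine ⟨fun i => if i ∈ A then w i else 0, fun i => if i ∈ A then 0 else w i, ?_, ?_, ?_, ?_, ?_, ?_⟩
  · funext i; by_cases h : i ∈ A <;> simp [h]
  · refine le_trans (Finset.card_le_card ?_) hAcard.le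
    intro i hi
    simp only [supp, Finset.mem_filter, Finset.mem_univ, true_and] at hi
    by_cases h : i ∈ A
    · exact h
    · simp [h] at hi
  · have : supp (fun i => if i ∈ A then 0 else w i) = supp w \ A := by
      ext i
      simp only [supp, Finset.mem_filter, Finset.mem_univ, true_and, Finset.mem_sdiff]
      by_cases h : i ∈ A <;> simp [h]
    rw [this, Finset.card_sdiff_of_subset hAsub, hAcard]
  · have h : ∀ i, |w i| = |if i ∈ A then w i else 0| + |if i ∈ A then 0 else w i| := by
      intro i; by_cases h : i ∈ A <;> simp [h]
    simp only [n1]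
    rw [← Finset.sum_add_distrib]
    exact Finset.sum_congr rfl fun i _ => h i
  · intro i; by_cases h : i ∈ A <;> simp [h]
  · have hn10 : n1 (fun i => if i ∈ A then w i else 0) = ∑ i ∈ A, |w i| := by
      simp only [n1, apply_ite abs, abs_zero]
      rw [Finset.sum_ite_mem, Finset.univ_inter]
    intro i
    by_cases h : i ∈ A
    · simp only [h, if_true, abs_zero]
      apply div_nonneg _ (Nat.cast_nonneg s)
      rw [hn10]
      exact Finset.sum_nonneg fun j _ => abs_nonneg _
    · simp only [h, if_false]
      by_cases hw : w i = 0
      · simp only [hw, abs_zero]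
        apply div_nonneg _ (Nat.cast_nonneg s)
        rw [hn10]
        exact Finset.sum_nonneg fun j _ => abs_nonneg _
      · have hi : i ∈ supp w := by simp [supp, hw]
        have hdom' : ∀ j ∈ A, |w i| ≤ |w j| := fun j hj => hdom j hj i hi h
        have hsum : (s : ℝ) * |w i| ≤ ∑ j ∈ A, |w j| := by
          calc (s : ℝ) * |w i| = ∑ _j ∈ A, |w i| := by
                rw [Finset.sum_const, nsmul_eq_mul, hAcard]
            _ ≤ ∑ j ∈ A, |w j| := Finset.sum_le_sum fun j hj => hdom' j hj
        rw [hn10, le_div_iff₀ (by exact_mod_cast hs : (0:ℝ) < s)]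
        linarith

lemma sqrt_smul_div {s : ℕ} (hs : 1 ≤ s) (a : ℝ) :
    Real.sqrt s * (a / s) = a / Real.sqrt s := by
  have hspos : (0:ℝ) < s := by exact_mod_cast hs
  have hss : Real.sqrt s * Real.sqrt s = (s:ℝ) := Real.mul_self_sqrt hspos.le
  have hsq : Real.sqrt s ≠ 0 := (Real.sqrt_pos.2 hspos).ne'
  rw [eq_div_iff hsq]
  calc Real.sqrt s * (a / s) * Real.sqrt s = a / s * (Real.sqrt s * Real.sqrt s) := by ring
    _ = a / s * s := by rw [hss]
    _ = a := by field_simp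

lemma bil_sM {s : ℕ} {δ : ℝ} (hsymm : Sig.IsSymm)
    (hsp : ∀ v : Fin d → ℝ, (supp v).card ≤ 2 * s → n2 v = 1 → |B Sig v v| ≤ δ)
    (hδ : 0 ≤ δ) {a b : Fin d → ℝ} (ha : (supp a).card ≤ s) (hb : (supp b).card ≤ s)
    {M : ℝ} (hM0 : 0 ≤ M) (hM : ∀ i, |a i| ≤ M) :
    |B Sig a b| ≤ δ * (Real.sqrt s * M) * Real.sqrt (n2 b) := by
  have h1 := bil Sig hsymm hsp ha hb
  have h2 : Real.sqrt (n2 a) ≤ Real.sqrt s * M := by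
    have h3 : n2 a ≤ (s:ℝ) * M ^ 2 := by
      refine le_trans (n2_le_card a M hM) ?_
      have : ((supp a).card : ℝ) ≤ (s : ℝ) := by exact_mod_cast ha
      exact mul_le_mul_of_nonneg_right this (sq_nonneg M)
    calc Real.sqrt (n2 a) ≤ Real.sqrt ((s:ℝ) * M ^ 2) := Real.sqrt_le_sqrt h3
      _ = Real.sqrt s * M := by
          rw [Real.sqrt_mul (Nat.cast_nonneg s), Real.sqrt_sq hM0]
  refine le_trans h1 ?_
  exact mul_le_mul_of_nonneg_right (mul_le_mul_of_nonneg_left h2 hδ) (Real.sqrt_nonneg _)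

lemma key_base {s : ℕ} {δ : ℝ} (hsymm : Sig.IsSymm)
    (hsp : ∀ v : Fin d → ℝ, (supp v).card ≤ 2 * s → n2 v = 1 → |B Sig v v| ≤ δ)
    (hδ : 0 ≤ δ) {w b : Fin d → ℝ} (hw : (supp w).card ≤ s) (hb : (supp b).card ≤ s)
    {M : ℝ} (hM0 : 0 ≤ M) (hM : ∀ i, |w i| ≤ M) :
    |B Sig w b| ≤ δ * (Real.sqrt s * M + n1 w / Real.sqrt s) * Real.sqrt (n2 b) := by
  refine le_trans (bil_sM Sig hsymm hsp hδ hw hb hM0 hM) ?_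
  refine mul_le_mul_of_nonneg_right ?_ (Real.sqrt_nonneg _)
  refine mul_le_mul_of_nonneg_left ?_ hδ
  exact le_add_of_nonneg_right (div_nonneg (n1_nonneg w) (Real.sqrt_nonneg _))

lemma key {s : ℕ} {δ : ℝ} (hsymm : Sig.IsSymm)
    (hsp : ∀ v : Fin d → ℝ, (supp v).card ≤ 2 * s → n2 v = 1 → |B Sig v v| ≤ δ)
    (hs : 1 ≤ s) (hδ : 0 ≤ δ) :
    ∀ n : ℕ, ∀ w : Fin d → ℝ, ∀ M : ℝ, 0 ≤ M → (∀ i, |w i| ≤ M) →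
      (supp w).card ≤ n → ∀ b : Fin d → ℝ, (supp b).card ≤ s →
      |B Sig w b| ≤ δ * (Real.sqrt s * M + n1 w / Real.sqrt s) * Real.sqrt (n2 b) := by
  intro n
  induction n with
  | zero =>
    intro w M hM0 hM hn b hb
    exact key_base Sig hsymm hsp hδ (le_trans hn (Nat.zero_le s)) hb hM0 hM
  | succ n ih =>
    intro w M hM0 hM hn b hb
    by_cases hws : (supp w).card ≤ s
    · exact key_base Sig hsymm hsp hδ hws hb hM0 hM
    · push_neg at hws
      obtain ⟨w₀, r, heq, h0card, hrcard, hn1, h0le, hr⟩ := decomp w hs hws.le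
      have hM'0 : 0 ≤ n1 w₀ / (s:ℝ) :=
        div_nonneg (n1_nonneg w₀) (Nat.cast_nonneg s)
      have h0M : ∀ i, |w₀ i| ≤ M := fun i => le_trans (h0le i) (hM i)
      have h1 : |B Sig w₀ b| ≤ δ * (Real.sqrt s * M) * Real.sqrt (n2 b) :=
        bil_sM Sig hsymm hsp hδ h0card hb hM0 h0M
      have hcard' : (supp r).card ≤ n := by omega
      have h2 := ih r (n1 w₀ / s) hM'0 hr hcard' b hb
      have h3 : Real.sqrt s * (n1 w₀ / s) = n1 w₀ / Real.sqrt s := sqrt_smul_div hs _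
      calc |B Sig w b| = |B Sig w₀ b + B Sig r b| := by rw [heq, B_add_left]
        _ ≤ |B Sig w₀ b| + |B Sig r b| := abs_add_le _ _
        _ ≤ δ * (Real.sqrt s * M) * Real.sqrt (n2 b)
            + δ * (Real.sqrt s * (n1 w₀ / s) + n1 r / Real.sqrt s) * Real.sqrt (n2 b) :=
            add_le_add h1 h2
        _ = δ * (Real.sqrt s * M + n1 w / Real.sqrt s) * Real.sqrt (n2 b) := by
            rw [h3, hn1]; ring

lemma n2_mono {a b : Fin d → ℝ} (h : ∀ i, |a i| ≤ |b i|) : n2 a ≤ n2 b := by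
  refine Finset.sum_le_sum fun i _ => ?_
  have := pow_le_pow_left₀ (abs_nonneg (a i)) (h i) 2
  simpa [sq_abs] using this

lemma bil2 {s : ℕ} {δ : ℝ} (hsymm : Sig.IsSymm)
    (hsp : ∀ v : Fin d → ℝ, (supp v).card ≤ 2 * s → n2 v = 1 → |B Sig v v| ≤ δ)
    (hs : 1 ≤ s) (hδ : 0 ≤ δ) (v b : Fin d → ℝ) (hb : (supp b).card ≤ s) :
    |B Sig v b| ≤ δ * (Real.sqrt (n2 v) + n1 v / Real.sqrt s) * Real.sqrt (n2 b) := by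
  by_cases hvs : (supp v).card ≤ s
  · refine le_trans (bil Sig hsymm hsp hvs hb) ?_
    refine mul_le_mul_of_nonneg_right ?_ (Real.sqrt_nonneg _)
    refine mul_le_mul_of_nonneg_left ?_ hδ
    exact le_add_of_nonneg_right (div_nonneg (n1_nonneg v) (Real.sqrt_nonneg _))
  · push_neg at hvs
    obtain ⟨v₀, r, heq, h0card, hrcard, hn1, h0le, hr⟩ := decomp v hs hvs.le
    have h1 : |B Sig v₀ b| ≤ δ * Real.sqrt (n2 v) * Real.sqrt (n2 b) := by
      refine le_trans (bil Sig hsymm hsp h0card hb) ?_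
      refine mul_le_mul_of_nonneg_right ?_ (Real.sqrt_nonneg _)
      exact mul_le_mul_of_nonneg_left (Real.sqrt_le_sqrt (n2_mono h0le)) hδ
    have hM'0 : 0 ≤ n1 v₀ / (s:ℝ) := div_nonneg (n1_nonneg v₀) (Nat.cast_nonneg s)
    have h2 := key Sig hsymm hsp hs hδ (supp r).card r (n1 v₀ / s) hM'0 hr le_rfl b hb
    have h3 : Real.sqrt s * (n1 v₀ / s) = n1 v₀ / Real.sqrt s := sqrt_smul_div hs _
    calc |B Sig v b| = |B Sig v₀ b + B Sig r b| := by rw [heq, B_add_left]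
      _ ≤ |B Sig v₀ b| + |B Sig r b| := abs_add_le _ _
      _ ≤ δ * Real.sqrt (n2 v) * Real.sqrt (n2 b)
          + δ * (Real.sqrt s * (n1 v₀ / s) + n1 r / Real.sqrt s) * Real.sqrt (n2 b) :=
          add_le_add h1 h2
      _ = δ * (Real.sqrt (n2 v) + n1 v / Real.sqrt s) * Real.sqrt (n2 b) := by
          rw [h3, hn1]; ring

lemma key2 {s : ℕ} {δ : ℝ} (hsymm : Sig.IsSymm)
    (hsp : ∀ v : Fin d → ℝ, (supp v).card ≤ 2 * s → n2 v = 1 → |B Sig v v| ≤ δ)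
    (hs : 1 ≤ s) (hδ : 0 ≤ δ) (v : Fin d → ℝ) :
    ∀ n : ℕ, ∀ w : Fin d → ℝ, ∀ M : ℝ, 0 ≤ M → (∀ i, |w i| ≤ M) →
      (supp w).card ≤ n →
      |B Sig w v| ≤ δ * (Real.sqrt s * M + n1 w / Real.sqrt s)
        * (Real.sqrt (n2 v) + n1 v / Real.sqrt s) := by
  have hK : 0 ≤ Real.sqrt (n2 v) + n1 v / Real.sqrt s :=
    add_nonneg (Real.sqrt_nonneg _) (div_nonneg (n1_nonneg v) (Real.sqrt_nonneg _))
  have base : ∀ w : Fin d → ℝ, ∀ M : ℝ, 0 ≤ M → (∀ i, |w i| ≤ M) →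
      (supp w).card ≤ s →
      |B Sig w v| ≤ δ * (Real.sqrt s * M + n1 w / Real.sqrt s)
        * (Real.sqrt (n2 v) + n1 v / Real.sqrt s) := by
    intro w M hM0 hM hws
    rw [B_symm Sig hsymm w v]
    refine le_trans (bil2 Sig hsymm hsp hs hδ v w hws) ?_
    have hsqw : Real.sqrt (n2 w) ≤ Real.sqrt s * M := by
      have h3 : n2 w ≤ (s:ℝ) * M ^ 2 := by
        refine le_trans (n2_le_card w M hM) ?_
        have : ((supp w).card : ℝ) ≤ (s : ℝ) := by exact_mod_cast hws
        exact mul_le_mul_of_nonneg_right this (sq_nonneg M)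
      calc Real.sqrt (n2 w) ≤ Real.sqrt ((s:ℝ) * M ^ 2) := Real.sqrt_le_sqrt h3
        _ = Real.sqrt s * M := by
            rw [Real.sqrt_mul (Nat.cast_nonneg s), Real.sqrt_sq hM0]
    have hstep : Real.sqrt (n2 w) ≤ Real.sqrt s * M + n1 w / Real.sqrt s :=
      le_trans hsqw (le_add_of_nonneg_right (div_nonneg (n1_nonneg w) (Real.sqrt_nonneg _)))
    calc δ * (Real.sqrt (n2 v) + n1 v / Real.sqrt s) * Real.sqrt (n2 w)
        ≤ δ * (Real.sqrt (n2 v) + n1 v / Real.sqrt s)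
            * (Real.sqrt s * M + n1 w / Real.sqrt s) :=
          mul_le_mul_of_nonneg_left hstep (mul_nonneg hδ hK)
      _ = δ * (Real.sqrt s * M + n1 w / Real.sqrt s)
            * (Real.sqrt (n2 v) + n1 v / Real.sqrt s) := by ring
  intro n
  induction n with
  | zero =>
    intro w M hM0 hM hn
    exact base w M hM0 hM (le_trans hn (Nat.zero_le s))
  | succ n ih =>
    intro w M hM0 hM hn
    by_cases hws : (supp w).card ≤ s
    · exact base w M hM0 hM hws
    · push_neg at hws
      obtain ⟨w₀, r, heq, h0card, hrcard, hn1, h0le, hr⟩ := decomp w hs hws.le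
      have hM'0 : 0 ≤ n1 w₀ / (s:ℝ) := div_nonneg (n1_nonneg w₀) (Nat.cast_nonneg s)
      have h0M : ∀ i, |w₀ i| ≤ M := fun i => le_trans (h0le i) (hM i)
      have h1 : |B Sig w₀ v| ≤ δ * (Real.sqrt s * M)
          * (Real.sqrt (n2 v) + n1 v / Real.sqrt s) := by
        rw [B_symm Sig hsymm w₀ v]
        refine le_trans (bil2 Sig hsymm hsp hs hδ v w₀ h0card) ?_
        have hsqw : Real.sqrt (n2 w₀) ≤ Real.sqrt s * M := by
          have h3 : n2 w₀ ≤ (s:ℝ) * M ^ 2 := by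
            refine le_trans (n2_le_card w₀ M h0M) ?_
            have : ((supp w₀).card : ℝ) ≤ (s : ℝ) := by exact_mod_cast h0card
            exact mul_le_mul_of_nonneg_right this (sq_nonneg M)
          calc Real.sqrt (n2 w₀) ≤ Real.sqrt ((s:ℝ) * M ^ 2) := Real.sqrt_le_sqrt h3
            _ = Real.sqrt s * M := by
                rw [Real.sqrt_mul (Nat.cast_nonneg s), Real.sqrt_sq hM0]
        calc δ * (Real.sqrt (n2 v) + n1 v / Real.sqrt s) * Real.sqrt (n2 w₀)
            ≤ δ * (Real.sqrt (n2 v) + n1 v / Real.sqrt s) * (Real.sqrt s * M) :=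
              mul_le_mul_of_nonneg_left hsqw (mul_nonneg hδ hK)
          _ = δ * (Real.sqrt s * M) * (Real.sqrt (n2 v) + n1 v / Real.sqrt s) := by ring
      have hcard' : (supp r).card ≤ n := by omega
      have h2 := ih r (n1 w₀ / s) hM'0 hr hcard'
      have h3 : Real.sqrt s * (n1 w₀ / s) = n1 w₀ / Real.sqrt s := sqrt_smul_div hs _
      calc |B Sig w v| = |B Sig w₀ v + B Sig r v| := by rw [heq, B_add_left]
        _ ≤ |B Sig w₀ v| + |B Sig r v| := abs_add_le _ _
        _ ≤ δ * (Real.sqrt s * M) * (Real.sqrt (n2 v) + n1 v / Real.sqrt s)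
            + δ * (Real.sqrt s * (n1 w₀ / s) + n1 r / Real.sqrt s)
              * (Real.sqrt (n2 v) + n1 v / Real.sqrt s) := add_le_add h1 h2
        _ = δ * (Real.sqrt s * M + n1 w / Real.sqrt s)
              * (Real.sqrt (n2 v) + n1 v / Real.sqrt s) := by rw [h3, hn1]; ring

lemma main_bound {s : ℕ} {δ : ℝ} (hsymm : Sig.IsSymm)
    (hsp : ∀ v : Fin d → ℝ, (supp v).card ≤ 2 * s → n2 v = 1 → |B Sig v v| ≤ δ)
    (hs : 1 ≤ s) (hδ : 0 ≤ δ) (v : Fin d → ℝ) :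
    |B Sig v v| ≤ δ * (Real.sqrt (n2 v) + n1 v / Real.sqrt s) ^ 2 := by
  have hK : 0 ≤ Real.sqrt (n2 v) + n1 v / Real.sqrt s :=
    add_nonneg (Real.sqrt_nonneg _) (div_nonneg (n1_nonneg v) (Real.sqrt_nonneg _))
  by_cases hvs : (supp v).card ≤ s
  · have h1 := quad_scale Sig hsp (le_trans hvs (by omega : s ≤ 2 * s))
    refine le_trans h1 ?_
    refine mul_le_mul_of_nonneg_left ?_ hδ
    calc n2 v = Real.sqrt (n2 v) ^ 2 := (Real.sq_sqrt (n2_nonneg v)).symm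
      _ ≤ (Real.sqrt (n2 v) + n1 v / Real.sqrt s) ^ 2 :=
          pow_le_pow_left₀ (Real.sqrt_nonneg _)
            (le_add_of_nonneg_right (div_nonneg (n1_nonneg v) (Real.sqrt_nonneg _))) 2
  · push_neg at hvs
    obtain ⟨v₀, r, heq, h0card, hrcard, hn1, h0le, hr⟩ := decomp v hs hvs.le
    have h1 : |B Sig v₀ v| ≤ δ * Real.sqrt (n2 v)
        * (Real.sqrt (n2 v) + n1 v / Real.sqrt s) := by
      rw [B_symm Sig hsymm v₀ v]
      refine le_trans (bil2 Sig hsymm hsp hs hδ v v₀ h0card) ?_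
      calc δ * (Real.sqrt (n2 v) + n1 v / Real.sqrt s) * Real.sqrt (n2 v₀)
          ≤ δ * (Real.sqrt (n2 v) + n1 v / Real.sqrt s) * Real.sqrt (n2 v) :=
            mul_le_mul_of_nonneg_left (Real.sqrt_le_sqrt (n2_mono h0le))
              (mul_nonneg hδ hK)
        _ = δ * Real.sqrt (n2 v) * (Real.sqrt (n2 v) + n1 v / Real.sqrt s) := by ring
    have hM'0 : 0 ≤ n1 v₀ / (s:ℝ) := div_nonneg (n1_nonneg v₀) (Nat.cast_nonneg s)
    have h2 := key2 Sig hsymm hsp hs hδ v (supp r).card r (n1 v₀ / s) hM'0 hr le_rfl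
    have h3 : Real.sqrt s * (n1 v₀ / s) = n1 v₀ / Real.sqrt s := sqrt_smul_div hs _
    calc |B Sig v v| = |B Sig v₀ v + B Sig r v| := by rw [heq, B_add_left]
      _ ≤ |B Sig v₀ v| + |B Sig r v| := abs_add_le _ _
      _ ≤ δ * Real.sqrt (n2 v) * (Real.sqrt (n2 v) + n1 v / Real.sqrt s)
          + δ * (Real.sqrt s * (n1 v₀ / s) + n1 r / Real.sqrt s)
            * (Real.sqrt (n2 v) + n1 v / Real.sqrt s) := add_le_add h1 h2
      _ = δ * (Real.sqrt (n2 v) + n1 v / Real.sqrt s) ^ 2 := by rw [h3, hn1]; ring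

end LW


/-- Lemma 12 of Loh and Wainwright (2011): a quadratic-form bound over `2s`-sparse unit
vectors extends to all vectors with constant `27`. -/
theorem restricted_quadratic_form_extension
    {d : ℕ} (Sig : Matrix (Fin d) (Fin d) ℝ) (hsymm : Sig.IsSymm)
    (s : ℕ) (hs : 1 ≤ s) (δ : ℝ)
    (hsparse : ∀ v : Fin d → ℝ,
      (Finset.univ.filter (fun i => v i ≠ 0)).card ≤ 2 * s →
      ∑ i, (v i) ^ 2 = 1 →
      |dotProduct v (Sig.mulVec v)| ≤ δ) :
    ∀ v : Fin d → ℝ,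
      |dotProduct v (Sig.mulVec v)|
        ≤ 27 * δ * (∑ i, (v i) ^ 2 + (∑ i, |v i|) ^ 2 / s) := by
  intro v
  rcases Nat.eq_zero_or_pos d with hd | hd
  · subst hd
    simp [dotProduct]
  · have hsp : ∀ v : Fin d → ℝ, (LW.supp v).card ≤ 2 * s → LW.n2 v = 1 →
        |LW.B Sig v v| ≤ δ := hsparse
    have hδ : 0 ≤ δ := by
      set i0 : Fin d := ⟨0, hd⟩
      set e : Fin d → ℝ := fun i => if i = i0 then 1 else 0 with he
      have hcard : (Finset.univ.filter (fun i => e i ≠ 0)).card ≤ 2 * s := by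
        have hsub : (Finset.univ.filter (fun i => e i ≠ 0)) ⊆ {i0} := by
          intro i hi
          simp only [Finset.mem_filter, Finset.mem_singleton] at hi ⊢
          by_contra hne
          exact hi.2 (by simp [he, hne])
        have := Finset.card_le_card hsub
        simp only [Finset.card_singleton] at this
        omega
      have hsum : ∑ i, (e i) ^ 2 = 1 := by
        have h : ∀ i, (e i) ^ 2 = if i = i0 then 1 else 0 := fun i => by
          by_cases h : i = i0 <;> simp [he, h]
        rw [Finset.sum_congr rfl fun i _ => h i]
        simp
      exact le_trans (abs_nonneg _) (hsparse e hcard hsum)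
    have hmain := LW.main_bound Sig hsymm hsp hs hδ v
    have hK2 : (Real.sqrt (LW.n2 v) + LW.n1 v / Real.sqrt s) ^ 2
        ≤ 27 * (LW.n2 v + (LW.n1 v) ^ 2 / s) := by
      set a := Real.sqrt (LW.n2 v) with ha
      set b := LW.n1 v / Real.sqrt s with hb
      have ha0 : 0 ≤ a := Real.sqrt_nonneg _
      have hb0 : 0 ≤ b := div_nonneg (LW.n1_nonneg v) (Real.sqrt_nonneg _)
      have ha2 : a ^ 2 = LW.n2 v := Real.sq_sqrt (LW.n2_nonneg v)
      have hb2 : b ^ 2 = (LW.n1 v) ^ 2 / s := by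
        rw [hb, div_pow, Real.sq_sqrt (Nat.cast_nonneg s)]
      rw [← ha2, ← hb2]
      nlinarith [sq_nonneg (a - b), sq_nonneg a, sq_nonneg b]
    show |LW.B Sig v v| ≤ 27 * δ * (LW.n2 v + (LW.n1 v) ^ 2 / s)
    calc |LW.B Sig v v| ≤ δ * (Real.sqrt (LW.n2 v) + LW.n1 v / Real.sqrt s) ^ 2 := hmain
      _ ≤ δ * (27 * (LW.n2 v + (LW.n1 v) ^ 2 / s)) := mul_le_mul_of_nonneg_left hK2 hδ
      _ = 27 * δ * (LW.n2 v + (LW.n1 v) ^ 2 / s) := by ring
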